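/- Let k be an infinite field, let L1, L2, L3 be three distinct 2-dimensional linear subspaces of k^4 all containing a common 1-dimensional subspace x, and let L4 be a 2-dimensional subspace with L4 ∩ Li = 0 for i = 1,2,3. Then the set of 2-dimensional linear subspaces W of k^4 with W ∩ Li ≠ 0 for all i = 1,2,3,4 is infinite. -/

import Mathlib

/-- Three concurrent lines in P^3 together with a fourth line skew to all of them
have infinitely many common transversals: stated linearly in terms of
2-dimensional subspaces of k^4. -/
theorem stmt2
    (k : Type*) [Field k] [Infinite k]
    (L1 L2 L3 L4 : Submodule k (Fin 4 → k))
    (h1 : Module.finrank k L1 = 2) (h2 : Module.finrank k L2 = 2)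
    (h3 : Module.finrank k L3 = 2) (h4 : Module.finrank k L4 = 2)
    (hne12 : L1 ≠ L2) (hne13 : L1 ≠ L3) (hne23 : L2 ≠ L3)
    (x : Submodule k (Fin 4 → k)) (hx : Module.finrank k x = 1)
    (hx1 : x ≤ L1) (hx2 : x ≤ L2) (hx3 : x ≤ L3)
    (h41 : L4 ⊓ L1 = ⊥) (h42 : L4 ⊓ L2 = ⊥) (h43 : L4 ⊓ L3 = ⊥) :
    {W : Submodule k (Fin 4 → k) | Module.finrank k W = 2 ∧
      W ⊓ L1 ≠ ⊥ ∧ W ⊓ L2 ≠ ⊥ ∧ W ⊓ L3 ≠ ⊥ ∧ W ⊓ L4 ≠ ⊥}.Infinite := by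
  classical
  have hxbot : x ≠ ⊥ := by
    intro h; rw [h, finrank_bot] at hx; omega
  obtain ⟨v, hvx, hv0⟩ := Submodule.exists_mem_ne_zero_of_ne_bot hxbot
  have hvL4 : v ∉ L4 := by
    intro hvL4
    have : v ∈ L4 ⊓ L1 := ⟨hvL4, hx1 hvx⟩
    rw [h41] at this
    exact hv0 this
  -- basis of L4, pushed to the ambient space
  let b : Module.Basis (Fin 2) k L4 := Module.finBasisOfFinrankEq k L4 h4
  set u : Fin 2 → (Fin 4 → k) := fun i => ((b i : L4) : Fin 4 → k) with hu
  have huli : LinearIndependent k u :=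
    b.linearIndependent.map' L4.subtype (Submodule.ker_subtype L4)
  have huli' := Fintype.linearIndependent_iff.mp huli
  have huL4 : ∀ i, u i ∈ L4 := fun i => (b i).2
  set w : k → (Fin 4 → k) := fun t => u 0 + t • u 1 with hw
  have hwL4 : ∀ t, w t ∈ L4 := fun t =>
    L4.add_mem (huL4 0) (L4.smul_mem t (huL4 1))
  have hwne : ∀ t, w t ≠ 0 := by
    intro t ht
    have := huli' ![1, t] (by simpa [Fin.sum_univ_two] using ht) 0
    simp at this
  have hli : ∀ t, LinearIndependent k ![v, w t] := by
    intro t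
    rw [LinearIndependent.pair_iff]
    intro s c hsc
    have hs : s = 0 := by
      by_contra hs
      have hv : v = s⁻¹ • (-(c • w t)) := by
        rw [eq_inv_smul_iff₀ hs, eq_neg_iff_add_eq_zero]
        exact hsc
      rw [hv] at hvL4
      exact hvL4 (L4.smul_mem _ (L4.neg_mem (L4.smul_mem _ (hwL4 t))))
    subst hs
    simp only [zero_smul, zero_add] at hsc
    rcases smul_eq_zero.mp hsc with h | h
    · exact ⟨rfl, h⟩
    · exact absurd h (hwne t)
  set W : k → Submodule k (Fin 4 → k) := fun t => Submodule.span k {v, w t} with hW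
  have hrange : ∀ t, Set.range ![v, w t] = {v, w t} := by
    intro t
    simp [Matrix.range_cons, Matrix.range_empty, Set.pair_comm]
  have hdim : ∀ t, Module.finrank k (W t) = 2 := by
    intro t
    have := finrank_span_eq_card (hli t)
    rw [hrange t] at this
    simpa using this
  have hvW : ∀ t, v ∈ W t := fun t => Submodule.subset_span (Set.mem_insert _ _)
  have hwW : ∀ t, w t ∈ W t := fun t =>
    Submodule.subset_span (Set.mem_insert_of_mem _ rfl)
  refine Set.infinite_of_injective_forall_mem (f := W) ?_ ?_
  · -- injectivity
    intro s t hst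
    by_contra hne
    have hws : w s ∈ W t := hst ▸ hwW s
    obtain ⟨a, c, hac⟩ := Submodule.mem_span_pair.mp hws
    have ha : a = 0 := by
      by_contra ha
      have hav : a • v = w s - c • w t := by rw [← hac]; abel
      have hmem : a • v ∈ L4 := hav ▸ L4.sub_mem (hwL4 s) (L4.smul_mem _ (hwL4 t))
      have : v ∈ L4 := by
        have := L4.smul_mem a⁻¹ hmem
        rwa [inv_smul_smul₀ ha] at this
      exact hvL4 this
    subst ha
    simp only [zero_smul, zero_add] at hac
    -- c • w t = w s
    have key : (c - 1) • u 0 + (c * t - s) • u 1 = 0 := by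
      have : c • (u 0 + t • u 1) - (u 0 + s • u 1) = 0 := by
        show c • w t - w s = 0
        rw [hac, sub_self]
      rw [smul_add, smul_smul] at this
      rw [sub_smul, sub_smul, one_smul]
      rw [← this]
      abel
    have hc1 := huli' ![c - 1, c * t - s] (by simpa [Fin.sum_univ_two] using key)
    have e0 := hc1 0
    have e1 := hc1 1
    simp only [Matrix.cons_val_zero, Matrix.cons_val_one, Matrix.head_cons,
      sub_eq_zero] at e0 e1
    rw [e0, one_mul] at e1
    exact hne e1.symm
  · intro t
    refine ⟨hdim t, ?_, ?_, ?_, ?_⟩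
    · exact Submodule.ne_bot_iff _ |>.mpr ⟨v, ⟨hvW t, hx1 hvx⟩, hv0⟩
    · exact Submodule.ne_bot_iff _ |>.mpr ⟨v, ⟨hvW t, hx2 hvx⟩, hv0⟩
    · exact Submodule.ne_bot_iff _ |>.mpr ⟨v, ⟨hvW t, hx3 hvx⟩, hv0⟩
    · exact Submodule.ne_bot_iff _ |>.mpr ⟨w t, ⟨hwW t, hwL4 t⟩, hwne t⟩
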